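/- Let ε > 0 be such that every entry of the matrix product A_U(k/λ)·A_U(k) is strictly positive for all k ∈ [0,ε] (this holds, for instance, for ε = 0.03). Fix k ∈ [0,ε] and a nonzero vector w₀ ∈ ℝ⁴ with nonnegative entries, and define for n ≥ 1 the iterates w_n := (A_U(k/λ^{2n−1})·A_U(k/λ^{2n−2}))·…·(A_U(k/λ)·A_U(k))·w₀. Then every w_n with n ≥ 1 has strictly positive entries, and there is a constant c > 0 (depending on w₀ and k) such that λ^{−4n}·w_n → c·w_PF as n → ∞, where w_PF = v_PF ⊗ v_PF with v_PF = (1/λ, 3/λ²)ᵗ the statistically normalised Perron–Frobenius eigenvector of M. -/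

import Mathlib

open Filter

/-- The Perron–Frobenius eigenvalue `λ = (1+√13)/2` of `M = [[1,1],[3,0]]`. -/
noncomputable def lam : ℝ := (1 + Real.sqrt 13) / 2

/-- `c(k) = cos(2πλk) + cos(2π(λ+1)k) + cos(2π(λ+2)k)`. -/
noncomputable def cfun (k : ℝ) : ℝ :=
  Real.cos (2 * Real.pi * lam * k) + Real.cos (2 * Real.pi * (lam + 1) * k) +
    Real.cos (2 * Real.pi * (lam + 2) * k)

/-- `s(k) = sin(2πλk) + sin(2π(λ+1)k) + sin(2π(λ+2)k)`. -/
noncomputable def sfun (k : ℝ) : ℝ :=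
  Real.sin (2 * Real.pi * lam * k) + Real.sin (2 * Real.pi * (lam + 1) * k) +
    Real.sin (2 * Real.pi * (lam + 2) * k)

/-- The real 4×4 matrix `A_U(k)`. -/
noncomputable def AU (k : ℝ) : Matrix (Fin 4) (Fin 4) ℝ :=
  !![1, 1, 1, 1;
     cfun k + sfun k, sfun k, cfun k, 0;
     cfun k - sfun k, cfun k, -sfun k, 0;
     cfun k ^ 2 + sfun k ^ 2, 0, 0, 0]

/-- `w_PF = v_PF ⊗ v_PF` with `v_PF = (1/λ, 3/λ²)ᵗ`, in lexicographic coordinates. -/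
noncomputable def wPF : Fin 4 → ℝ :=
  ![1 / lam ^ 2, 3 / lam ^ 3, 3 / lam ^ 3, 9 / lam ^ 4]


noncomputable def mu : ℝ := (1 - Real.sqrt 13) / 2

lemma s13 : Real.sqrt 13 ^ 2 = 13 := Real.sq_sqrt (by norm_num)
lemma sqrt13_gt : (3.6 : ℝ) < Real.sqrt 13 := by
  have := Real.lt_sqrt (x := 3.6) (y := 13) (by norm_num)
  rw [this]; norm_num
lemma sqrt13_lt : Real.sqrt 13 < 3.7 := by
  have := Real.sqrt_lt' (x := 13) (y := 3.7) (by norm_num)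
  rw [this]; norm_num
lemma lam_gt : (2.3 : ℝ) < lam := by unfold lam; nlinarith [sqrt13_gt]
lemma lam_lt : lam < 2.35 := by unfold lam; nlinarith [sqrt13_lt]
lemma lam_pos : (0:ℝ) < lam := by nlinarith [lam_gt]
lemma one_lt_lam : (1:ℝ) < lam := by nlinarith [lam_gt]
lemma hla : lam ^ 2 = lam + 3 := by unfold lam; linear_combination (1/4) * s13
lemma hmu : mu ^ 2 = mu + 3 := by unfold mu; linear_combination (1/4) * s13
lemma mu_gt : (-1.4 : ℝ) < mu := by unfold mu; nlinarith [sqrt13_lt]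
lemma mu_lt : mu < -1 := by unfold mu; nlinarith [sqrt13_gt]
lemma lam_add_mu : lam + mu = 1 := by unfold lam mu; ring
lemma lam_mul_mu : lam * mu = -3 := by unfold lam mu; linear_combination (-1/4) * s13
lemma abs_mu_le : |mu| ≤ lam := by
  rw [abs_le]; constructor <;> nlinarith [mu_gt, mu_lt, lam_gt]
lemma abs_lam_le : |lam| ≤ lam := le_of_eq (abs_of_pos lam_pos)

lemma cos_near_one (u : ℝ) : |Real.cos u - 1| ≤ |u| := by
  have h2 : Real.cos u = 2 * Real.cos (u/2) ^ 2 - 1 := by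
    have := Real.cos_two_mul (u/2); rw [show 2*(u/2) = u by ring] at this; linarith
  have hs : Real.sin (u/2) ^ 2 + Real.cos (u/2) ^ 2 = 1 := Real.sin_sq_add_cos_sq _
  have habs : |Real.sin (u/2)| ≤ |u/2| := Real.abs_sin_le_abs
  have h1 : |Real.sin (u/2)| ≤ 1 := Real.abs_sin_le_one _
  have : Real.cos u - 1 = -(2 * Real.sin (u/2)^2) := by rw [h2]; linarith
  rw [this, abs_neg, abs_of_nonneg (by positivity)]
  have : Real.sin (u/2)^2 = |Real.sin (u/2)| * |Real.sin (u/2)| := by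
    rw [← abs_mul, ← sq, abs_of_nonneg (by positivity)]
  rw [this]
  calc 2 * (|Real.sin (u/2)| * |Real.sin (u/2)|) ≤ 2 * (|u/2| * 1) := by
        apply mul_le_mul_of_nonneg_left _ (by norm_num)
        exact mul_le_mul habs h1 (abs_nonneg _) (abs_nonneg _)
    _ = |u| := by rw [abs_div]; simp [abs_of_nonneg]; ring

noncomputable def KK : ℝ := 6 * Real.pi * (lam + 2)

lemma KK_pos : 0 < KK := by
  have := Real.pi_pos; have := lam_pos; unfold KK; nlinarith

lemma cfun_bound (t : ℝ) : |cfun t - 3| ≤ KK * |t| := by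
  have h0 := cos_near_one (2 * Real.pi * lam * t)
  have h1 := cos_near_one (2 * Real.pi * (lam + 1) * t)
  have h2 := cos_near_one (2 * Real.pi * (lam + 2) * t)
  have e0 : |2 * Real.pi * lam * t| = 2 * Real.pi * lam * |t| := by
    rw [abs_mul (2 * Real.pi * lam) t, abs_of_nonneg (by nlinarith [Real.pi_pos, lam_pos] : (0:ℝ) ≤ 2 * Real.pi * lam)]
  have e1 : |2 * Real.pi * (lam + 1) * t| = 2 * Real.pi * (lam + 1) * |t| := by
    rw [abs_mul (2 * Real.pi * (lam + 1)) t,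
      abs_of_nonneg (by nlinarith [Real.pi_pos, lam_pos] : (0:ℝ) ≤ 2 * Real.pi * (lam + 1))]
  have e2 : |2 * Real.pi * (lam + 2) * t| = 2 * Real.pi * (lam + 2) * |t| := by
    rw [abs_mul (2 * Real.pi * (lam + 2)) t,
      abs_of_nonneg (by nlinarith [Real.pi_pos, lam_pos] : (0:ℝ) ≤ 2 * Real.pi * (lam + 2))]
  rw [e0] at h0; rw [e1] at h1; rw [e2] at h2
  have tri : |cfun t - 3| ≤ |Real.cos (2 * Real.pi * lam * t) - 1| +
      |Real.cos (2 * Real.pi * (lam + 1) * t) - 1| +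
      |Real.cos (2 * Real.pi * (lam + 2) * t) - 1| := by
    unfold cfun
    calc |Real.cos (2 * Real.pi * lam * t) + Real.cos (2 * Real.pi * (lam + 1) * t) +
        Real.cos (2 * Real.pi * (lam + 2) * t) - 3|
        = |(Real.cos (2 * Real.pi * lam * t) - 1) + (Real.cos (2 * Real.pi * (lam + 1) * t) - 1) +
          (Real.cos (2 * Real.pi * (lam + 2) * t) - 1)| := by ring_nf
      _ ≤ _ := abs_add_three _ _ _
  have hpi := Real.pi_pos
  have hl := lam_pos
  have ht := abs_nonneg t
  unfold KK; nlinarith [tri]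

lemma sfun_bound (t : ℝ) : |sfun t| ≤ KK * |t| := by
  have h0 := Real.abs_sin_le_abs (x := 2 * Real.pi * lam * t)
  have h1 := Real.abs_sin_le_abs (x := 2 * Real.pi * (lam + 1) * t)
  have h2 := Real.abs_sin_le_abs (x := 2 * Real.pi * (lam + 2) * t)
  have e0 : |2 * Real.pi * lam * t| = 2 * Real.pi * lam * |t| := by
    rw [abs_mul (2 * Real.pi * lam) t, abs_of_nonneg (by nlinarith [Real.pi_pos, lam_pos] : (0:ℝ) ≤ 2 * Real.pi * lam)]
  have e1 : |2 * Real.pi * (lam + 1) * t| = 2 * Real.pi * (lam + 1) * |t| := by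
    rw [abs_mul (2 * Real.pi * (lam + 1)) t,
      abs_of_nonneg (by nlinarith [Real.pi_pos, lam_pos] : (0:ℝ) ≤ 2 * Real.pi * (lam + 1))]
  have e2 : |2 * Real.pi * (lam + 2) * t| = 2 * Real.pi * (lam + 2) * |t| := by
    rw [abs_mul (2 * Real.pi * (lam + 2)) t,
      abs_of_nonneg (by nlinarith [Real.pi_pos, lam_pos] : (0:ℝ) ≤ 2 * Real.pi * (lam + 2))]
  rw [e0] at h0; rw [e1] at h1; rw [e2] at h2
  have tri : |sfun t| ≤ |Real.sin (2 * Real.pi * lam * t)| +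
      |Real.sin (2 * Real.pi * (lam + 1) * t)| + |Real.sin (2 * Real.pi * (lam + 2) * t)| :=
    abs_add_three _ _ _
  have hpi := Real.pi_pos
  have hl := lam_pos
  have ht := abs_nonneg t
  unfold KK; nlinarith [tri]

lemma cfun_abs (t : ℝ) : |cfun t| ≤ 3 := by
  have := abs_add_three (Real.cos (2 * Real.pi * lam * t)) (Real.cos (2 * Real.pi * (lam + 1) * t))
    (Real.cos (2 * Real.pi * (lam + 2) * t))
  have a0 := Real.abs_cos_le_one (2 * Real.pi * lam * t)
  have a1 := Real.abs_cos_le_one (2 * Real.pi * (lam + 1) * t)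
  have a2 := Real.abs_cos_le_one (2 * Real.pi * (lam + 2) * t)
  unfold cfun; linarith

lemma sfun_abs (t : ℝ) : |sfun t| ≤ 3 := by
  have := abs_add_three (Real.sin (2 * Real.pi * lam * t)) (Real.sin (2 * Real.pi * (lam + 1) * t))
    (Real.sin (2 * Real.pi * (lam + 2) * t))
  have a0 := Real.abs_sin_le_one (2 * Real.pi * lam * t)
  have a1 := Real.abs_sin_le_one (2 * Real.pi * (lam + 1) * t)
  have a2 := Real.abs_sin_le_one (2 * Real.pi * (lam + 2) * t)
  unfold sfun; linarith

lemma AU_apply (t : ℝ) (x : Fin 4 → ℝ) :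
    (AU t).mulVec x = ![x 0 + x 1 + x 2 + x 3,
      (cfun t + sfun t) * x 0 + sfun t * x 1 + cfun t * x 2,
      (cfun t - sfun t) * x 0 + cfun t * x 1 + (-(sfun t)) * x 2,
      (cfun t ^ 2 + sfun t ^ 2) * x 0] := by
  funext i; fin_cases i <;>
    simp [AU, Matrix.mulVec, dotProduct, Fin.sum_univ_four]

noncomputable def F (a b : ℝ) (x : Fin 4 → ℝ) : ℝ := a * b * x 0 + a * x 1 + b * x 2 + x 3
noncomputable def S4 (x : Fin 4 → ℝ) : ℝ := |x 0| + |x 1| + |x 2| + |x 3|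

lemma S4_nonneg (x : Fin 4 → ℝ) : 0 ≤ S4 x := by unfold S4; positivity

lemma cfun_zero : cfun 0 = 3 := by norm_num [cfun]
lemma sfun_zero : sfun 0 = 0 := by simp [sfun]

lemma F_smul (a b r : ℝ) (x : Fin 4 → ℝ) : F a b (r • x) = r * F a b x := by
  simp [F, Pi.smul_apply, smul_eq_mul]; ring

lemma F_eig (a b : ℝ) (ha : a ^ 2 = a + 3) (hb : b ^ 2 = b + 3) (x : Fin 4 → ℝ) :
    F a b ((AU 0).mulVec x) = a * b * F a b x := by
  rw [AU_apply]
  simp only [F, cfun_zero, sfun_zero, Matrix.cons_val_zero, Matrix.cons_val_one,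
    Matrix.head_cons, Matrix.cons_val_two, Matrix.tail_cons, Matrix.cons_val_three]
  linear_combination (-(x 0 * (b + 3) + x 1 * b)) * ha + (-(x 0 * a ^ 2 + x 2 * a)) * hb

/-- abstract estimate used in `step1` -/
lemma abs_est (la r a b c s x0 x1 x2 x3 : ℝ) (hr0 : 0 ≤ r) (hla : 0 < la)
    (hdc : |c - 3| ≤ r) (hds : |s| ≤ r) (hca : |c| ≤ 3) (hsa : |s| ≤ 3)
    (haa : |a| ≤ la) (hba : |b| ≤ la) :
    |a * ((c - 3) * x0 + s * x0 + s * x1 + (c - 3) * x2)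
      + b * ((c - 3) * x0 + (-s) * x0 + (c - 3) * x1 + (-s) * x2)
      + ((c - 3) * (c + 3) + s * s) * x0|
    ≤ (4 * la + 9) * r * (|x0| + |x1| + |x2| + |x3|) := by
  have h1 : |(c - 3) * x0 + s * x0 + s * x1 + (c - 3) * x2| ≤
      r * (2 * |x0| + |x1| + |x2|) := by
    have tri : |(c - 3) * x0 + s * x0 + s * x1 + (c - 3) * x2| ≤
        |(c - 3) * x0| + |s * x0| + |s * x1| + |(c - 3) * x2| := by
      calc |(c - 3) * x0 + s * x0 + s * x1 + (c - 3) * x2|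
          ≤ |(c - 3) * x0 + s * x0 + s * x1| + |(c - 3) * x2| := abs_add_le _ _
        _ ≤ (|(c - 3) * x0| + |s * x0| + |s * x1|) + |(c - 3) * x2| := by
            have := abs_add_three ((c - 3) * x0) (s * x0) (s * x1); linarith
    rw [abs_mul, abs_mul, abs_mul, abs_mul] at tri
    nlinarith [mul_le_mul_of_nonneg_right hdc (abs_nonneg x0),
      mul_le_mul_of_nonneg_right hds (abs_nonneg x0),
      mul_le_mul_of_nonneg_right hds (abs_nonneg x1),
      mul_le_mul_of_nonneg_right hdc (abs_nonneg x2)]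
  have h2 : |(c - 3) * x0 + (-s) * x0 + (c - 3) * x1 + (-s) * x2| ≤
      r * (2 * |x0| + |x1| + |x2|) := by
    have tri : |(c - 3) * x0 + (-s) * x0 + (c - 3) * x1 + (-s) * x2| ≤
        |(c - 3) * x0| + |(-s) * x0| + |(c - 3) * x1| + |(-s) * x2| := by
      calc |(c - 3) * x0 + (-s) * x0 + (c - 3) * x1 + (-s) * x2|
          ≤ |(c - 3) * x0 + (-s) * x0 + (c - 3) * x1| + |(-s) * x2| := abs_add_le _ _
        _ ≤ (|(c - 3) * x0| + |(-s) * x0| + |(c - 3) * x1|) + |(-s) * x2| := by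
            have := abs_add_three ((c - 3) * x0) ((-s) * x0) ((c - 3) * x1); linarith
    rw [abs_mul, abs_mul, abs_mul, abs_mul, abs_neg] at tri
    nlinarith [mul_le_mul_of_nonneg_right hdc (abs_nonneg x0),
      mul_le_mul_of_nonneg_right hds (abs_nonneg x0),
      mul_le_mul_of_nonneg_right hdc (abs_nonneg x1),
      mul_le_mul_of_nonneg_right hds (abs_nonneg x2)]
  have h3 : |((c - 3) * (c + 3) + s * s) * x0| ≤ 9 * r * |x0| := by
    rw [abs_mul]
    have e1 : |(c - 3) * (c + 3) + s * s| ≤ 9 * r := by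
      have t1 : |(c - 3) * (c + 3)| ≤ r * 6 := by
        rw [abs_mul]
        have h6 : |c + 3| ≤ 6 := by
          have := abs_add_le c (3:ℝ); simp at this; nlinarith
        nlinarith [abs_nonneg (c - 3), abs_nonneg (c + 3)]
      have t2 : |s * s| ≤ 3 * r := by
        rw [abs_mul]; nlinarith [abs_nonneg s]
      calc |(c - 3) * (c + 3) + s * s| ≤ |(c - 3) * (c + 3)| + |s * s| := abs_add_le _ _
        _ ≤ 9 * r := by linarith
    calc |(c - 3) * (c + 3) + s * s| * |x0| ≤ (9 * r) * |x0| :=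
          mul_le_mul_of_nonneg_right e1 (abs_nonneg x0)
      _ = 9 * r * |x0| := by ring
  have tri2 := abs_add_three (a * ((c - 3) * x0 + s * x0 + s * x1 + (c - 3) * x2))
      (b * ((c - 3) * x0 + (-s) * x0 + (c - 3) * x1 + (-s) * x2))
      (((c - 3) * (c + 3) + s * s) * x0)
  rw [abs_mul, abs_mul] at tri2
  have f1 : |a| * |(c - 3) * x0 + s * x0 + s * x1 + (c - 3) * x2| ≤
      la * (r * (2 * |x0| + |x1| + |x2|)) := mul_le_mul haa h1 (abs_nonneg _) hla.le
  have f2 : |b| * |(c - 3) * x0 + (-s) * x0 + (c - 3) * x1 + (-s) * x2| ≤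
      la * (r * (2 * |x0| + |x1| + |x2|)) := mul_le_mul hba h2 (abs_nonneg _) hla.le
  have goal2 : la * (r * (2 * |x0| + |x1| + |x2|)) + la * (r * (2 * |x0| + |x1| + |x2|))
      + 9 * r * |x0| ≤ (4 * la + 9) * r * (|x0| + |x1| + |x2| + |x3|) := by
    nlinarith [mul_nonneg hr0 (abs_nonneg x0), mul_nonneg hr0 (abs_nonneg x1),
      mul_nonneg hr0 (abs_nonneg x2), mul_nonneg hr0 (abs_nonneg x3), hla]
  linarith

noncomputable def C1 : ℝ := KK * (4 * lam + 9)

lemma C1_pos : 0 < C1 := by unfold C1; nlinarith [KK_pos, lam_pos]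

lemma step1 (a b : ℝ) (ha : a ^ 2 = a + 3) (hb : b ^ 2 = b + 3)
    (haa : |a| ≤ lam) (hba : |b| ≤ lam) (t : ℝ) (x : Fin 4 → ℝ) :
    |F a b ((AU t).mulVec x) - a * b * F a b x| ≤ C1 * |t| * S4 x := by
  rw [← F_eig a b ha hb x]
  have ediff : F a b ((AU t).mulVec x) - F a b ((AU 0).mulVec x) =
      a * ((cfun t - 3) * x 0 + sfun t * x 0 + sfun t * x 1 + (cfun t - 3) * x 2)
      + b * ((cfun t - 3) * x 0 + (-(sfun t)) * x 0 + (cfun t - 3) * x 1 + (-(sfun t)) * x 2)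
      + (((cfun t - 3) * (cfun t + 3) + sfun t * sfun t) * x 0) := by
    rw [AU_apply, AU_apply]
    simp only [F, cfun_zero, sfun_zero, Matrix.cons_val_zero, Matrix.cons_val_one,
      Matrix.head_cons, Matrix.cons_val_two, Matrix.tail_cons, Matrix.cons_val_three]
    ring
  rw [ediff]
  have key := abs_est lam (KK * |t|) a b (cfun t) (sfun t) (x 0) (x 1) (x 2) (x 3)
    (mul_nonneg KK_pos.le (abs_nonneg t)) lam_pos (cfun_bound t) (sfun_bound t)
    (cfun_abs t) (sfun_abs t) haa hba
  have e2 : (4 * lam + 9) * (KK * |t|) * (|x 0| + |x 1| + |x 2| + |x 3|) = C1 * |t| * S4 x := by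
    unfold C1 S4; ring
  linarith

lemma S4row (c s x0 x1 x2 x3 : ℝ) (hca : |c| ≤ 3) (hsa : |s| ≤ 3) :
    |x0 + x1 + x2 + x3| + |(c + s) * x0 + s * x1 + c * x2|
      + |(c - s) * x0 + c * x1 + (-s) * x2| + |(c ^ 2 + s ^ 2) * x0|
    ≤ 31 * (|x0| + |x1| + |x2| + |x3|) := by
  have b0 : |x0 + x1 + x2 + x3| ≤ |x0| + |x1| + |x2| + |x3| := by
    calc |x0 + x1 + x2 + x3| ≤ |x0 + x1 + x2| + |x3| := abs_add_le _ _
      _ ≤ (|x0| + |x1| + |x2|) + |x3| := by have := abs_add_three x0 x1 x2; linarith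
  have b1 : |(c + s) * x0 + s * x1 + c * x2| ≤ 6 * |x0| + 3 * |x1| + 3 * |x2| := by
    have tri := abs_add_three ((c + s) * x0) (s * x1) (c * x2)
    rw [abs_mul, abs_mul, abs_mul] at tri
    have hcs : |c + s| ≤ 6 := (abs_add_le c s).trans (by linarith)
    nlinarith [abs_nonneg x0, abs_nonneg x1, abs_nonneg x2,
      mul_le_mul_of_nonneg_right hcs (abs_nonneg x0),
      mul_le_mul_of_nonneg_right hsa (abs_nonneg x1),
      mul_le_mul_of_nonneg_right hca (abs_nonneg x2)]
  have b2 : |(c - s) * x0 + c * x1 + (-s) * x2| ≤ 6 * |x0| + 3 * |x1| + 3 * |x2| := by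
    have tri := abs_add_three ((c - s) * x0) (c * x1) ((-s) * x2)
    rw [abs_mul, abs_mul, abs_mul, abs_neg] at tri
    have hcs : |c - s| ≤ 6 := (abs_sub c s).trans (by linarith)
    nlinarith [abs_nonneg x0, abs_nonneg x1, abs_nonneg x2,
      mul_le_mul_of_nonneg_right hcs (abs_nonneg x0),
      mul_le_mul_of_nonneg_right hca (abs_nonneg x1),
      mul_le_mul_of_nonneg_right hsa (abs_nonneg x2)]
  have b3 : |(c ^ 2 + s ^ 2) * x0| ≤ 18 * |x0| := by
    rw [abs_mul]
    have h18 : |c ^ 2 + s ^ 2| ≤ 18 := by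
      rw [abs_of_nonneg (by positivity)]
      nlinarith [sq_abs c, sq_abs s, abs_nonneg c, abs_nonneg s]
    nlinarith [abs_nonneg x0]
  nlinarith [abs_nonneg x0, abs_nonneg x1, abs_nonneg x2, abs_nonneg x3]

lemma S4_mulVec (t : ℝ) (x : Fin 4 → ℝ) : S4 ((AU t).mulVec x) ≤ 31 * S4 x := by
  rw [AU_apply]
  show |_| + |_| + |_| + |_| ≤ _
  simp only [Matrix.cons_val_zero, Matrix.cons_val_one, Matrix.head_cons,
    Matrix.cons_val_two, Matrix.tail_cons, Matrix.cons_val_three]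
  exact S4row (cfun t) (sfun t) (x 0) (x 1) (x 2) (x 3) (cfun_abs t) (sfun_abs t)

noncomputable def C2 : ℝ := C1 * 31 + lam ^ 2 * C1

lemma C2_pos : 0 < C2 := by unfold C2; nlinarith [C1_pos, lam_pos]

lemma step2 (a b : ℝ) (ha : a ^ 2 = a + 3) (hb : b ^ 2 = b + 3)
    (haa : |a| ≤ lam) (hba : |b| ≤ lam) (t : ℝ) (x : Fin 4 → ℝ) :
    |F a b ((AU (t / lam) * AU t).mulVec x) - (a * b) ^ 2 * F a b x| ≤ C2 * |t| * S4 x := by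
  rw [← Matrix.mulVec_mulVec]
  have k1 := step1 a b ha hb haa hba (t / lam) ((AU t).mulVec x)
  have k2 := step1 a b ha hb haa hba t x
  have hy := S4_mulVec t x
  have htl : |t / lam| ≤ |t| := by
    rw [abs_div, abs_of_pos lam_pos]
    exact div_le_self (abs_nonneg t) one_lt_lam.le
  have habs : |a * b| ≤ lam ^ 2 := by
    rw [abs_mul]
    nlinarith [mul_le_mul haa hba (abs_nonneg b) lam_pos.le]
  have dec : F a b ((AU (t / lam)).mulVec ((AU t).mulVec x)) - (a * b) ^ 2 * F a b x =
      (F a b ((AU (t / lam)).mulVec ((AU t).mulVec x)) - a * b * F a b ((AU t).mulVec x))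
      + a * b * (F a b ((AU t).mulVec x) - a * b * F a b x) := by ring
  rw [dec]
  have tri := abs_add_le (F a b ((AU (t / lam)).mulVec ((AU t).mulVec x))
      - a * b * F a b ((AU t).mulVec x)) (a * b * (F a b ((AU t).mulVec x) - a * b * F a b x))
  rw [abs_mul] at tri
  have g1 : |F a b ((AU (t / lam)).mulVec ((AU t).mulVec x))
      - a * b * F a b ((AU t).mulVec x)| ≤ C1 * |t| * (31 * S4 x) := by
    calc |F a b ((AU (t / lam)).mulVec ((AU t).mulVec x)) - a * b * F a b ((AU t).mulVec x)|
        ≤ C1 * |t / lam| * S4 ((AU t).mulVec x) := k1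
      _ ≤ C1 * |t| * (31 * S4 x) := by
          have h1 : C1 * |t / lam| ≤ C1 * |t| := mul_le_mul_of_nonneg_left htl C1_pos.le
          have h2 : (0:ℝ) ≤ C1 * |t| := mul_nonneg C1_pos.le (abs_nonneg t)
          nlinarith [S4_nonneg ((AU t).mulVec x), S4_nonneg x,
            mul_nonneg C1_pos.le (abs_nonneg (t / lam))]
  have g2 : |a * b| * |F a b ((AU t).mulVec x) - a * b * F a b x| ≤
      lam ^ 2 * (C1 * |t| * S4 x) := by
    apply mul_le_mul habs k2 (abs_nonneg _) (by positivity)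
  have efin : C1 * |t| * (31 * S4 x) + lam ^ 2 * (C1 * |t| * S4 x) = C2 * |t| * S4 x := by
    unfold C2; ring
  linarith

noncomputable def G1 : Fin 4 → ℝ := ![1/13, -mu/13, -mu/13, mu^2/13]
noncomputable def G2 : Fin 4 → ℝ := ![-1/13, lam/13, mu/13, 3/13]
noncomputable def G3 : Fin 4 → ℝ := ![-1/13, mu/13, lam/13, 3/13]
noncomputable def G4 : Fin 4 → ℝ := ![1/13, -lam/13, -lam/13, lam^2/13]

lemma hmu' : mu = 1 - lam := by linarith [lam_add_mu]

lemma reconstruct (x : Fin 4 → ℝ) (i : Fin 4) :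
    x i = F lam lam x * G1 i + F lam mu x * G2 i + F mu lam x * G3 i + F mu mu x * G4 i := by
  fin_cases i
  · show x 0 = F lam lam x * (1/13) + F lam mu x * (-1/13) + F mu lam x * (-1/13)
        + F mu mu x * (1/13)
    simp only [F]; rw [hmu']; linear_combination (-4/13 * x 0) * hla
  · show x 1 = F lam lam x * (-mu/13) + F lam mu x * (lam/13) + F mu lam x * (mu/13)
        + F mu mu x * (-lam/13)
    simp only [F]; rw [hmu']; linear_combination (-4/13 * x 1) * hla
  · show x 2 = F lam lam x * (-mu/13) + F lam mu x * (mu/13) + F mu lam x * (lam/13)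
        + F mu mu x * (-lam/13)
    simp only [F]; rw [hmu']; linear_combination (-4/13 * x 2) * hla
  · show x 3 = F lam lam x * (mu^2/13) + F lam mu x * (3/13) + F mu lam x * (3/13)
        + F mu mu x * (lam^2/13)
    simp only [F]; rw [hmu']
    linear_combination (((-2*lam^2 + 2*lam) * x 0 + x 1 + x 2 - 2 * x 3) / 13) * hla

lemma G1_wPF (i : Fin 4) : lam ^ 2 / 13 * wPF i = G1 i := by
  have h0 : lam ≠ 0 := ne_of_gt lam_pos
  fin_cases i <;>
    simp only [wPF, G1, Fin.zero_eta, Fin.mk_one, Fin.reduceFinMk, Matrix.cons_val_zero, Matrix.cons_val_one, Matrix.head_cons,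
      Matrix.cons_val_two, Matrix.tail_cons, Matrix.cons_val_three, Fin.isValue] <;>
    field_simp
  · linear_combination lam_mul_mu
  · linear_combination lam_mul_mu
  · linear_combination (3 - lam*mu) * lam_mul_mu

lemma one_sub_ge (x : ℝ) (h0 : 0 ≤ x) (h2 : x ≤ 1/2) : Real.exp (-(2*x)) ≤ 1 - x := by
  have e1 : 1 + 2*x ≤ Real.exp (2*x) := by have := Real.add_one_le_exp (2*x); linarith
  have h12 : (0:ℝ) < 1 + 2*x := by linarith
  have hexp : (0:ℝ) < Real.exp (2*x) := Real.exp_pos _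
  rw [Real.exp_neg]
  have i1 : (Real.exp (2*x))⁻¹ ≤ (1 + 2*x)⁻¹ := by
    apply inv_anti₀ h12 e1
  have i2 : (1 + 2*x)⁻¹ ≤ 1 - x := by
    rw [inv_eq_one_div, div_le_iff₀ h12]; nlinarith
  linarith

lemma geom_sum_bound (σ : ℝ) (h0 : 0 ≤ σ) (h1 : σ < 1) (n : ℕ) :
    ∑ j ∈ Finset.range n, σ ^ j ≤ (1 - σ)⁻¹ := by
  have := Summable.sum_le_tsum (Finset.range n) (fun i _ => pow_nonneg h0 i)
    (summable_geometric_of_lt_one h0 h1)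
  rwa [tsum_geometric_of_lt_one h0 h1] at this

lemma seq_bdd (δ σ : ℝ) (a : ℕ → ℝ) (hδ : 0 ≤ δ) (hσ0 : 0 ≤ σ) (hσ1 : σ < 1)
    (hnn : ∀ n, 0 ≤ a n) (hstep : ∀ n, a (n+1) ≤ (1 + δ * σ ^ n) * a n) :
    ∀ n, a n ≤ a 0 * Real.exp (δ * (1 - σ)⁻¹) := by
  have claim : ∀ n, a n ≤ a 0 * Real.exp (δ * ∑ j ∈ Finset.range n, σ ^ j) := by
    intro n
    induction n with
    | zero => simp
    | succ n ih =>
      have h1 : (0:ℝ) ≤ 1 + δ * σ ^ n := by positivity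
      have step := (hstep n).trans (mul_le_mul_of_nonneg_left ih h1)
      have h2 : 1 + δ * σ ^ n ≤ Real.exp (δ * σ ^ n) := by
        have := Real.add_one_le_exp (δ * σ ^ n); linarith
      have h3 : (1 + δ * σ ^ n) * (a 0 * Real.exp (δ * ∑ j ∈ Finset.range n, σ ^ j)) ≤
          Real.exp (δ * σ ^ n) * (a 0 * Real.exp (δ * ∑ j ∈ Finset.range n, σ ^ j)) := by
        apply mul_le_mul_of_nonneg_right h2 (mul_nonneg (hnn 0) (Real.exp_pos _).le)
      have h4 : Real.exp (δ * σ ^ n) * (a 0 * Real.exp (δ * ∑ j ∈ Finset.range n, σ ^ j)) =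
          a 0 * Real.exp (δ * ∑ j ∈ Finset.range (n+1), σ ^ j) := by
        rw [Finset.sum_range_succ, mul_add, Real.exp_add]; ring
      linarith
  intro n
  have h5 : δ * ∑ j ∈ Finset.range n, σ ^ j ≤ δ * (1 - σ)⁻¹ :=
    mul_le_mul_of_nonneg_left (geom_sum_bound σ hσ0 hσ1 n) hδ
  have h6 := mul_le_mul_of_nonneg_left (Real.exp_le_exp.mpr h5) (hnn 0)
  linarith [claim n]

lemma seq_conv (c σ : ℝ) (a : ℕ → ℝ) (hσ0 : 0 ≤ σ) (hσ1 : σ < 1)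
    (hstep : ∀ n, |a (n+1) - a n| ≤ c * σ ^ n) : ∃ L, Tendsto a atTop (nhds L) := by
  have hsum : Summable (fun j => a (j+1) - a j) := by
    have habs : Summable (fun j => |a (j+1) - a j|) := by
      apply Summable.of_nonneg_of_le (fun _ => abs_nonneg _) hstep
      exact (summable_geometric_of_lt_one hσ0 hσ1).mul_left c
    exact summable_abs_iff.mp habs
  obtain ⟨S, hS⟩ := hsum
  refine ⟨S + a 0, ?_⟩
  have h1 := hS.tendsto_sum_nat
  have h2 : ∀ n, ∑ j ∈ Finset.range n, (a (j+1) - a j) = a n - a 0 := Finset.sum_range_sub a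
  have h3 : Tendsto (fun n => a n - a 0) atTop (nhds S) := by
    simpa only [h2] using h1
  have := h3.add (tendsto_const_nhds (x := a 0))
  simpa using this

lemma seq_lower (δ σ : ℝ) (N : ℕ) (a : ℕ → ℝ) (hδ : 0 ≤ δ) (hσ0 : 0 ≤ σ) (hσ1 : σ < 1)
    (hhalf : δ * σ ^ N ≤ 1/2) (hnn : ∀ n, 0 ≤ a n)
    (hstep : ∀ n, (1 - δ * σ ^ n) * a n ≤ a (n+1)) :
    ∀ j, a N * Real.exp (-(2 * δ * (1 - σ)⁻¹)) ≤ a (N + j) := by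
  have claim : ∀ j, a N * Real.exp (-(2 * δ * ∑ i ∈ Finset.range j, σ ^ (N + i))) ≤ a (N + j) := by
    intro j
    induction j with
    | zero => simp
    | succ j ih =>
      have hx0 : 0 ≤ δ * σ ^ (N + j) := by positivity
      have hx2 : δ * σ ^ (N + j) ≤ 1/2 := by
        have : σ ^ (N + j) ≤ σ ^ N := pow_le_pow_of_le_one hσ0 hσ1.le (Nat.le_add_right N j)
        nlinarith
      have hexp := one_sub_ge (δ * σ ^ (N + j)) hx0 hx2
      have hE : (0:ℝ) ≤ a N * Real.exp (-(2 * δ * ∑ i ∈ Finset.range j, σ ^ (N + i))) :=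
        mul_nonneg (hnn N) (Real.exp_pos _).le
      have s1 : (1 - δ * σ ^ (N + j)) * (a N * Real.exp (-(2 * δ * ∑ i ∈ Finset.range j, σ ^ (N + i))))
          ≤ (1 - δ * σ ^ (N + j)) * a (N + j) := by
        apply mul_le_mul_of_nonneg_left ih (by linarith)
      have s2 : Real.exp (-(2 * (δ * σ ^ (N + j)))) *
          (a N * Real.exp (-(2 * δ * ∑ i ∈ Finset.range j, σ ^ (N + i))))
          ≤ (1 - δ * σ ^ (N + j)) * (a N * Real.exp (-(2 * δ * ∑ i ∈ Finset.range j, σ ^ (N + i)))) :=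
        mul_le_mul_of_nonneg_right hexp hE
      have s3 : Real.exp (-(2 * (δ * σ ^ (N + j)))) *
          (a N * Real.exp (-(2 * δ * ∑ i ∈ Finset.range j, σ ^ (N + i))))
          = a N * Real.exp (-(2 * δ * ∑ i ∈ Finset.range (j+1), σ ^ (N + i))) := by
        have he : -(2 * δ * ∑ i ∈ Finset.range (j+1), σ ^ (N + i)) =
            -(2 * δ * ∑ i ∈ Finset.range j, σ ^ (N + i)) + -(2 * (δ * σ ^ (N + j))) := by
          rw [Finset.sum_range_succ]; ring
        rw [he, Real.exp_add]; ring
      have goal := le_trans (le_trans (le_of_eq s3.symm) s2) (le_trans s1 (hstep (N + j)))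
      have : N + j + 1 = N + (j + 1) := by omega
      rwa [this] at goal
  intro j
  refine le_trans ?_ (claim j)
  have hS : ∑ i ∈ Finset.range j, σ ^ (N + i) ≤ (1 - σ)⁻¹ := by
    have h1 : ∀ i, σ ^ (N + i) ≤ σ ^ i := fun i =>
      pow_le_pow_of_le_one hσ0 hσ1.le (Nat.le_add_left i N)
    calc ∑ i ∈ Finset.range j, σ ^ (N + i) ≤ ∑ i ∈ Finset.range j, σ ^ i :=
          Finset.sum_le_sum (fun i _ => h1 i)
      _ ≤ (1 - σ)⁻¹ := geom_sum_bound σ hσ0 hσ1 j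
  have h6 : Real.exp (-(2 * δ * (1 - σ)⁻¹)) ≤
      Real.exp (-(2 * δ * ∑ i ∈ Finset.range j, σ ^ (N + i))) :=
    Real.exp_le_exp.mpr (by nlinarith)
  exact mul_le_mul_of_nonneg_left h6 (hnn N)

lemma geom_decay (θ σ C : ℝ) (x : ℕ → ℝ) (hθ0 : 0 ≤ θ) (hθσ : θ < σ) (hσ1 : σ < 1) (hC : 0 ≤ C)
    (hstep : ∀ n, |x (n+1)| ≤ θ * |x n| + C * σ ^ n) : Tendsto x atTop (nhds 0) := by
  have hσ0 : 0 ≤ σ := le_trans hθ0 hθσ.le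
  set K := |x 0| + C / (σ - θ) with hK
  have hKC : C ≤ K * (σ - θ) := by
    rw [hK]
    have : C / (σ - θ) * (σ - θ) = C := div_mul_cancel₀ C (by linarith)
    nlinarith [abs_nonneg (x 0)]
  have hK0 : 0 ≤ K := by
    have h1 : 0 ≤ C / (σ - θ) := div_nonneg hC (by linarith)
    rw [hK]; positivity
  have claim : ∀ n, |x n| ≤ K * σ ^ n := by
    intro n
    induction n with
    | zero =>
      rw [pow_zero, mul_one, hK]
      nlinarith [div_nonneg hC (by linarith : (0:ℝ) ≤ σ - θ)]
    | succ n ih =>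
      have h1 : θ * |x n| ≤ θ * (K * σ ^ n) := mul_le_mul_of_nonneg_left ih hθ0
      have h2 := hstep n
      have h3 : θ * (K * σ ^ n) + C * σ ^ n ≤ K * σ ^ (n+1) := by
        rw [pow_succ]
        nlinarith [pow_nonneg hσ0 n]
      linarith
  apply squeeze_zero_norm claim
  have h := tendsto_pow_atTop_nhds_zero_of_lt_one hσ0 hσ1
  have := h.const_mul K
  simpa using this

set_option maxHeartbeats 2000000 in
/-- Let `ε > 0` be such that every entry of `A_U(k/λ)·A_U(k)` is strictly positive for all
`k ∈ [0,ε]`. Fix `k ∈ [0,ε]` and a nonzero nonnegative `w₀ ∈ ℝ⁴`, and define the iterates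
`w_n := (A_U(k/λ^{2n−1})·A_U(k/λ^{2n−2}))·…·(A_U(k/λ)·A_U(k))·w₀`. Then every `w_n` with
`n ≥ 1` has strictly positive entries, and there is a constant `c > 0` (depending on `w₀`
and `k`) such that `λ^{−4n}·w_n → c·w_PF` as `n → ∞`. -/
theorem stmt2 (ε : ℝ) (hε : 0 < ε)
    (hpos : ∀ k ∈ Set.Icc (0 : ℝ) ε, ∀ i j : Fin 4, 0 < (AU (k / lam) * AU k) i j)
    (k : ℝ) (hk : k ∈ Set.Icc (0 : ℝ) ε)
    (w0 : Fin 4 → ℝ) (hw0 : w0 ≠ 0) (hw0nn : ∀ i, 0 ≤ w0 i)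
    (w : ℕ → Fin 4 → ℝ) (hw_zero : w 0 = w0)
    (hw : ∀ n : ℕ,
      w (n + 1) = (AU (k / lam ^ (2 * n + 1)) * AU (k / lam ^ (2 * n))).mulVec (w n)) :
    (∀ n : ℕ, 1 ≤ n → ∀ i : Fin 4, 0 < w n i) ∧
    ∃ c : ℝ, 0 < c ∧
      Tendsto (fun n : ℕ => (lam ^ (4 * n))⁻¹ • w n) atTop (nhds (c • wPF)) := by
  obtain ⟨hk0, hkε⟩ := hk
  have hl0 := lam_pos
  have hl1 := one_lt_lam
  -- the scales
  have hq0 : (0:ℝ) < (lam ^ 2)⁻¹ := by positivity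
  have hl2 : (1:ℝ) < lam ^ 2 := by nlinarith
  have hq1 : (lam ^ 2)⁻¹ < 1 := by
    have e := inv_mul_cancel₀ (ne_of_gt (show (0:ℝ) < lam ^ 2 by positivity))
    nlinarith
  have ht0 : ∀ n : ℕ, 0 ≤ k / lam ^ (2 * n) := fun n =>
    div_nonneg hk0 (pow_nonneg hl0.le _)
  have hpow1 : ∀ n : ℕ, (1:ℝ) ≤ lam ^ (2 * n) := fun n => one_le_pow₀ hl1.le
  have htε : ∀ n : ℕ, k / lam ^ (2 * n) ≤ ε := fun n =>
    le_trans (div_le_self hk0 (hpow1 n)) hkε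
  have htq : ∀ n : ℕ, k / lam ^ (2 * n) ≤ ε * ((lam ^ 2)⁻¹) ^ n := by
    intro n
    have e : k / lam ^ (2 * n) = k * ((lam ^ 2)⁻¹) ^ n := by
      rw [pow_mul, div_eq_mul_inv, inv_pow]
    rw [e]
    exact mul_le_mul_of_nonneg_right hkε (pow_nonneg hq0.le n)
  have hrec : ∀ n : ℕ,
      w (n + 1) = (AU (k / lam ^ (2 * n) / lam) * AU (k / lam ^ (2 * n))).mulVec (w n) := by
    intro n
    have e : k / lam ^ (2 * n + 1) = k / lam ^ (2 * n) / lam := by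
      rw [div_div, ← pow_succ]
    rw [hw n, e]
  have hBpos : ∀ n (i j : Fin 4),
      0 < (AU (k / lam ^ (2 * n) / lam) * AU (k / lam ^ (2 * n))) i j := fun n =>
    hpos _ ⟨ht0 n, htε n⟩
  -- positivity of the orbit
  have hposstep : ∀ n : ℕ, (∀ i, 0 ≤ w n i) → (∃ j, 0 < w n j) → ∀ i, 0 < w (n + 1) i := by
    intro n hnn ⟨j0, hj0⟩ i
    rw [hrec n]
    show 0 < ∑ j, (AU (k / lam ^ (2 * n) / lam) * AU (k / lam ^ (2 * n))) i j * w n j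
    refine Finset.sum_pos' (fun j _ => mul_nonneg (hBpos n i j).le (hnn j))
      ⟨j0, Finset.mem_univ _, mul_pos (hBpos n i j0) hj0⟩
  have hstate : ∀ n : ℕ, (∀ i, 0 ≤ w n i) ∧ (∃ i, 0 < w n i) := by
    intro n
    induction n with
    | zero =>
      rw [hw_zero]
      refine ⟨hw0nn, ?_⟩
      by_contra h
      push_neg at h
      exact hw0 (funext fun i => le_antisymm (h i) (hw0nn i))
    | succ n ih =>
      have h := hposstep n ih.1 ih.2
      exact ⟨fun i => (h i).le, ⟨0, h 0⟩⟩
  have part1 : ∀ n : ℕ, 1 ≤ n → ∀ i : Fin 4, 0 < w n i := by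
    intro n hn i
    obtain ⟨m, rfl⟩ : ∃ m, n = m + 1 := ⟨n - 1, by omega⟩
    exact hposstep m (hstate m).1 (hstate m).2 i
  refine ⟨part1, ?_⟩
  -- the normalised orbit
  set v : ℕ → Fin 4 → ℝ := fun n => (lam ^ (4 * n))⁻¹ • w n with hv
  have hvnn : ∀ n i, 0 ≤ v n i := by
    intro n i
    exact mul_nonneg (by positivity) ((hstate n).1 i)
  have hvpos : ∀ n, 1 ≤ n → ∀ i, 0 < v n i := by
    intro n hn i
    exact mul_pos (by positivity) (part1 n hn i)
  have hvrec : ∀ n : ℕ, v (n + 1) = (lam ^ 4)⁻¹ •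
      ((AU (k / lam ^ (2 * n) / lam) * AU (k / lam ^ (2 * n))).mulVec (v n)) := by
    intro n
    have hsc : (lam ^ (4 * (n + 1)))⁻¹ = (lam ^ 4)⁻¹ * (lam ^ (4 * n))⁻¹ := by
      rw [show 4 * (n + 1) = 4 + 4 * n by ring, pow_add, mul_inv]
    calc v (n + 1) = (lam ^ (4 * (n + 1)))⁻¹ • w (n + 1) := rfl
      _ = (lam ^ 4)⁻¹ • ((lam ^ (4 * n))⁻¹ •
            ((AU (k / lam ^ (2 * n) / lam) * AU (k / lam ^ (2 * n))).mulVec (w n))) := by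
          rw [hrec n, hsc, smul_smul]
      _ = (lam ^ 4)⁻¹ •
            ((AU (k / lam ^ (2 * n) / lam) * AU (k / lam ^ (2 * n))).mulVec (v n)) := by
          rw [Matrix.mulVec_smul]
  -- coordinates
  have hS4 : ∀ n, S4 (v n) ≤ F lam lam (v n) := by
    intro n
    have e : S4 (v n) = v n 0 + v n 1 + v n 2 + v n 3 := by
      unfold S4
      rw [abs_of_nonneg (hvnn n 0), abs_of_nonneg (hvnn n 1), abs_of_nonneg (hvnn n 2),
        abs_of_nonneg (hvnn n 3)]
    rw [e]
    show _ ≤ lam * lam * v n 0 + lam * v n 1 + lam * v n 2 + v n 3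
    nlinarith [mul_nonneg (hvnn n 0) (by nlinarith : (0:ℝ) ≤ lam * lam - 1),
      mul_nonneg (hvnn n 1) (by nlinarith : (0:ℝ) ≤ lam - 1),
      mul_nonneg (hvnn n 2) (by nlinarith : (0:ℝ) ≤ lam - 1)]
  have hann : ∀ n, 0 ≤ F lam lam (v n) := fun n => le_trans (S4_nonneg _) (hS4 n)
  -- master perturbation estimate
  have hstepF : ∀ (α β : ℝ), α ^ 2 = α + 3 → β ^ 2 = β + 3 → |α| ≤ lam → |β| ≤ lam → ∀ n,
      |F α β (v (n + 1)) - (α * β) ^ 2 * (lam ^ 4)⁻¹ * F α β (v n)| ≤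
        ((lam ^ 4)⁻¹ * C2 * ε) * ((lam ^ 2)⁻¹) ^ n * F lam lam (v n) := by
    intro α β hα hβ hαl hβl n
    have e1 : F α β (v (n + 1)) = (lam ^ 4)⁻¹ *
        F α β ((AU (k / lam ^ (2 * n) / lam) * AU (k / lam ^ (2 * n))).mulVec (v n)) := by
      rw [hvrec n, F_smul]
    have k2 := step2 α β hα hβ hαl hβl (k / lam ^ (2 * n)) (v n)
    have e2 : |F α β (v (n + 1)) - (α * β) ^ 2 * (lam ^ 4)⁻¹ * F α β (v n)| = (lam ^ 4)⁻¹ *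
        |F α β ((AU (k / lam ^ (2 * n) / lam) * AU (k / lam ^ (2 * n))).mulVec (v n)) -
          (α * β) ^ 2 * F α β (v n)| := by
      rw [← abs_of_pos (show (0:ℝ) < (lam ^ 4)⁻¹ by positivity), ← abs_mul, e1]
      congr 1
      rw [abs_of_pos (show (0:ℝ) < (lam ^ 4)⁻¹ by positivity)]
      ring
    rw [e2]
    have habs : |k / lam ^ (2 * n)| ≤ ε * ((lam ^ 2)⁻¹) ^ n := by
      rw [abs_of_nonneg (ht0 n)]; exact htq n
    have h3 : C2 * |k / lam ^ (2 * n)| * S4 (v n) ≤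
        C2 * (ε * ((lam ^ 2)⁻¹) ^ n) * F lam lam (v n) := by
      exact mul_le_mul (mul_le_mul_of_nonneg_left habs C2_pos.le) (hS4 n) (S4_nonneg _)
        (mul_nonneg C2_pos.le (mul_nonneg hε.le (pow_nonneg hq0.le n)))
    have h4 := le_trans k2 h3
    calc (lam ^ 4)⁻¹ * |F α β ((AU (k / lam ^ (2 * n) / lam) *
            AU (k / lam ^ (2 * n))).mulVec (v n)) - (α * β) ^ 2 * F α β (v n)|
        ≤ (lam ^ 4)⁻¹ * (C2 * (ε * ((lam ^ 2)⁻¹) ^ n) * F lam lam (v n)) :=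
          mul_le_mul_of_nonneg_left h4 (by positivity)
      _ = ((lam ^ 4)⁻¹ * C2 * ε) * ((lam ^ 2)⁻¹) ^ n * F lam lam (v n) := by ring

  -- the leading coefficient sequence
  have hd0 : (0:ℝ) < (lam ^ 4)⁻¹ * C2 * ε :=
    mul_pos (mul_pos (by positivity) C2_pos) hε
  set d0 : ℝ := (lam ^ 4)⁻¹ * C2 * ε with hd0def
  have astep : ∀ n, |F lam lam (v (n + 1)) - F lam lam (v n)| ≤
      d0 * ((lam ^ 2)⁻¹) ^ n * F lam lam (v n) := by
    intro n
    have h := hstepF lam lam hla hla abs_lam_le abs_lam_le n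
    have ec : (lam * lam) ^ 2 * (lam ^ 4)⁻¹ = 1 := by
      rw [show (lam * lam) ^ 2 = lam ^ 4 by ring]
      exact mul_inv_cancel₀ (by positivity)
    rw [ec, one_mul] at h
    exact h
  have aup : ∀ n, F lam lam (v n) ≤
      F lam lam (v 0) * Real.exp (d0 * (1 - (lam ^ 2)⁻¹)⁻¹) := by
    apply seq_bdd d0 ((lam ^ 2)⁻¹) (fun n => F lam lam (v n)) hd0.le hq0.le hq1 hann
    intro n
    have h := (abs_le.mp (astep n)).2
    nlinarith [h]
  set A : ℝ := F lam lam (v 0) * Real.exp (d0 * (1 - (lam ^ 2)⁻¹)⁻¹) with hAdef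
  have hA0 : 0 ≤ A := mul_nonneg (hann 0) (Real.exp_pos _).le
  have hdiff : ∀ n, |F lam lam (v (n + 1)) - F lam lam (v n)| ≤ (d0 * A) * ((lam ^ 2)⁻¹) ^ n := by
    intro n
    have h1 := astep n
    have h2 : d0 * ((lam ^ 2)⁻¹) ^ n * F lam lam (v n) ≤ (d0 * A) * ((lam ^ 2)⁻¹) ^ n := by
      have := mul_le_mul_of_nonneg_left (aup n)
        (mul_nonneg hd0.le (pow_nonneg hq0.le n))
      nlinarith [this]
    linarith
  obtain ⟨La, hLa⟩ := seq_conv (d0 * A) ((lam ^ 2)⁻¹) (fun n => F lam lam (v n)) hq0.le hq1 hdiff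
  -- positivity of the limit
  obtain ⟨N0, hN0⟩ := exists_pow_lt_of_lt_one (show (0:ℝ) < (2 * d0)⁻¹ by
    exact inv_pos.mpr (by linarith)) hq1
  set N : ℕ := max N0 1 with hNdef
  have hhalf : d0 * ((lam ^ 2)⁻¹) ^ N ≤ 1 / 2 := by
    have h1 : ((lam ^ 2)⁻¹) ^ N ≤ ((lam ^ 2)⁻¹) ^ N0 :=
      pow_le_pow_of_le_one hq0.le hq1.le (le_max_left N0 1)
    have h2 : d0 * ((lam ^ 2)⁻¹) ^ N ≤ d0 * (2 * d0)⁻¹ :=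
      mul_le_mul_of_nonneg_left (le_trans h1 hN0.le) hd0.le
    have h3 : d0 * (2 * d0)⁻¹ = 1 / 2 := by
      field_simp
    linarith
  have lowstep : ∀ n, (1 - d0 * ((lam ^ 2)⁻¹) ^ n) * F lam lam (v n) ≤ F lam lam (v (n + 1)) := by
    intro n
    have h := (abs_le.mp (astep n)).1
    nlinarith [h]
  have hml := seq_lower d0 ((lam ^ 2)⁻¹) N (fun n => F lam lam (v n)) hd0.le hq0.le hq1 hhalf hann lowstep
  have haN : 0 < F lam lam (v N) := by
    have hvN := hvpos N (le_max_right N0 1) 3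
    have hle : v N 3 ≤ S4 (v N) := by
      unfold S4
      have := le_abs_self (v N 3)
      have h0 := abs_nonneg (v N 0); have h1 := abs_nonneg (v N 1)
      have h2 := abs_nonneg (v N 2)
      linarith
    linarith [hS4 N, hle]
  have hm0 : 0 < F lam lam (v N) * Real.exp (-(2 * d0 * (1 - (lam ^ 2)⁻¹)⁻¹)) :=
    mul_pos haN (Real.exp_pos _)
  have hLapos : 0 < La := by
    have hev : ∀ᶠ n in atTop, F lam lam (v N) * Real.exp (-(2 * d0 * (1 - (lam ^ 2)⁻¹)⁻¹)) ≤
        F lam lam (v n) := by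
      rw [eventually_atTop]
      refine ⟨N, fun n hn => ?_⟩
      have := hml (n - N)
      rwa [show N + (n - N) = n by omega] at this
    exact lt_of_lt_of_le hm0 (ge_of_tendsto hLa hev)
  -- the decaying coordinates
  have hθ0 : (0:ℝ) ≤ 9 * (lam ^ 4)⁻¹ := by positivity
  have hl4 : lam ^ 4 = (lam + 3) ^ 2 := by linear_combination (lam ^ 2 + lam + 3) * hla
  have h9 : (9:ℝ) < lam ^ 4 := by nlinarith [lam_gt]
  have hθ1 : 9 * (lam ^ 4)⁻¹ < 1 := by
    have e := mul_inv_cancel₀ (ne_of_gt (show (0:ℝ) < lam ^ 4 by positivity))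
    nlinarith [inv_pos.mpr (show (0:ℝ) < lam ^ 4 by positivity)]
  have hθσ : 9 * (lam ^ 4)⁻¹ < (9 * (lam ^ 4)⁻¹ + 1) / 2 := by linarith
  have hσ1 : (9 * (lam ^ 4)⁻¹ + 1) / 2 < 1 := by linarith
  have hqθ : (lam ^ 2)⁻¹ ≤ 9 * (lam ^ 4)⁻¹ := by
    have e4 : (lam ^ 4)⁻¹ = ((lam ^ 2)⁻¹) ^ 2 := by
      rw [show lam ^ 4 = (lam ^ 2) ^ 2 by ring, ← inv_pow]
    have hl9 : lam ^ 2 ≤ 9 := by nlinarith [lam_lt, lam_gt]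
    have e1 : (lam ^ 2)⁻¹ * lam ^ 2 = 1 := inv_mul_cancel₀ (by positivity)
    rw [e4]
    nlinarith [mul_nonneg hq0.le (sub_nonneg.mpr hl9), hq0]
  have hqσ : (lam ^ 2)⁻¹ ≤ (9 * (lam ^ 4)⁻¹ + 1) / 2 := le_trans hqθ hθσ.le
  have decayAux : ∀ (α β : ℝ), α ^ 2 = α + 3 → β ^ 2 = β + 3 → |α| ≤ lam → |β| ≤ lam →
      (α * β) ^ 2 * (lam ^ 4)⁻¹ ≤ 9 * (lam ^ 4)⁻¹ →
      Tendsto (fun n => F α β (v n)) atTop (nhds 0) := by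
    intro α β hα hβ hαl hβl hcle
    apply geom_decay (9 * (lam ^ 4)⁻¹) ((9 * (lam ^ 4)⁻¹ + 1) / 2) (d0 * A)
      (fun n => F α β (v n))
      hθ0 hθσ hσ1 (mul_nonneg hd0.le hA0)
    intro n
    have h := hstepF α β hα hβ hαl hβl n
    have hc0 : (0:ℝ) ≤ (α * β) ^ 2 * (lam ^ 4)⁻¹ := by positivity
    have tri : |F α β (v (n + 1))| ≤
        |F α β (v (n + 1)) - (α * β) ^ 2 * (lam ^ 4)⁻¹ * F α β (v n)| +
        ((α * β) ^ 2 * (lam ^ 4)⁻¹) * |F α β (v n)| := by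
      have e : F α β (v (n + 1)) =
          (F α β (v (n + 1)) - (α * β) ^ 2 * (lam ^ 4)⁻¹ * F α β (v n)) +
          ((α * β) ^ 2 * (lam ^ 4)⁻¹) * F α β (v n) := by ring
      calc |F α β (v (n + 1))| = |_ + _| := congrArg abs e
        _ ≤ _ + |((α * β) ^ 2 * (lam ^ 4)⁻¹) * F α β (v n)| := abs_add_le _ _
        _ = _ + ((α * β) ^ 2 * (lam ^ 4)⁻¹) * |F α β (v n)| := by
            rw [abs_mul, abs_of_nonneg hc0]
    have hcc : ((α * β) ^ 2 * (lam ^ 4)⁻¹) * |F α β (v n)| ≤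
        9 * (lam ^ 4)⁻¹ * |F α β (v n)| :=
      mul_le_mul_of_nonneg_right hcle (abs_nonneg _)
    have hrhs : d0 * ((lam ^ 2)⁻¹) ^ n * F lam lam (v n) ≤
        (d0 * A) * (((9 * (lam ^ 4)⁻¹ + 1) / 2)) ^ n := by
      have h1 : ((lam ^ 2)⁻¹) ^ n ≤ ((9 * (lam ^ 4)⁻¹ + 1) / 2) ^ n :=
        pow_le_pow_left₀ hq0.le hqσ n
      have h2 : d0 * ((lam ^ 2)⁻¹) ^ n * F lam lam (v n) ≤
          d0 * ((lam ^ 2)⁻¹) ^ n * A :=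
        mul_le_mul_of_nonneg_left (aup n) (mul_nonneg hd0.le (pow_nonneg hq0.le n))
      have h3 : d0 * ((lam ^ 2)⁻¹) ^ n * A ≤ d0 * ((9 * (lam ^ 4)⁻¹ + 1) / 2) ^ n * A := by
        have := mul_le_mul_of_nonneg_left h1 hd0.le
        nlinarith [this, hA0]
      calc d0 * ((lam ^ 2)⁻¹) ^ n * F lam lam (v n) ≤ d0 * ((lam ^ 2)⁻¹) ^ n * A := h2
        _ ≤ d0 * ((9 * (lam ^ 4)⁻¹ + 1) / 2) ^ n * A := h3
        _ = (d0 * A) * ((9 * (lam ^ 4)⁻¹ + 1) / 2) ^ n := by ring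
    linarith
  have hb2 := decayAux lam mu hla hmu abs_lam_le abs_mu_le
    (le_of_eq (by rw [lam_mul_mu]; norm_num))
  have hb3 := decayAux mu lam hmu hla abs_mu_le abs_lam_le
    (le_of_eq (by rw [mul_comm mu lam, lam_mul_mu]; norm_num))
  have hb4 := decayAux mu mu hmu hmu abs_mu_le abs_mu_le (by
    have h4 : (mu * mu) ^ 2 ≤ 9 := by nlinarith [hmu, mu_lt, mu_gt]
    exact mul_le_mul_of_nonneg_right h4 (by positivity))
  -- assembling the limit
  refine ⟨La * (lam ^ 2 / 13), mul_pos hLapos (by positivity), ?_⟩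
  rw [tendsto_pi_nhds]
  intro i
  have hfe : (fun n => v n i) = fun n => F lam lam (v n) * G1 i + F lam mu (v n) * G2 i +
      F mu lam (v n) * G3 i + F mu mu (v n) * G4 i := funext fun n => reconstruct (v n) i
  rw [hfe]
  have T := (((hLa.mul_const (G1 i)).add (hb2.mul_const (G2 i))).add
    (hb3.mul_const (G3 i))).add (hb4.mul_const (G4 i))
  have hval : ((La * (lam ^ 2 / 13)) • wPF) i = La * G1 i + 0 * G2 i + 0 * G3 i + 0 * G4 i := by
    rw [Pi.smul_apply, smul_eq_mul, ← G1_wPF i]; ring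
  rw [hval]
  exact T
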